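/- Let f : [0,∞) → ℝ be a C² function that is nonincreasing (f' ≤ 0), bounded below, and satisfies f''(t) ≥ C·f'(t) for all t ≥ 0, where C > 0 is a constant. Then f'(t) → 0 as t → ∞. -/

import Mathlib

open Set Filter Real

theorem phong_sturm_convergence (f f' f'' : ℝ → ℝ) (C : ℝ) (hC : 0 < C)
    (hd : ∀ t, 0 ≤ t → HasDerivAt f (f' t) t)
    (hd' : ∀ t, 0 ≤ t → HasDerivAt f' (f'' t) t)
    (hcont : ContinuousOn f'' (Set.Ici 0))
    (hmono : ∀ t, 0 ≤ t → f' t ≤ 0)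
    (hbdd : ∃ m, ∀ t, 0 ≤ t → m ≤ f t)
    (hineq : ∀ t, 0 ≤ t → C * f' t ≤ f'' t) :
    Filter.Tendsto f' Filter.atTop (nhds 0) := by
  obtain ⟨m, hm⟩ := hbdd
  have hE : (0:ℝ) < 1 - Real.exp (-C) := by
    have : Real.exp (-C) < 1 := Real.exp_lt_one_iff.mpr (by linarith)
    linarith
  set K : ℝ := C / (1 - Real.exp (-C)) with hK
  have hKpos : 0 < K := div_pos hC hE
  -- derivative of g u = exp(-(C*u)) * f' u
  have hgd : ∀ u : ℝ, 0 ≤ u → HasDerivAt (fun u => Real.exp (-(C*u)) * f' u)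
      (Real.exp (-(C*u)) * (f'' u - C * f' u)) u := by
    intro u hu
    have h1 : HasDerivAt (fun u : ℝ => -(C*u)) (-C) u := by
      exact (((hasDerivAt_id' u).const_mul C).neg).congr_deriv (by ring)
    have h2 : HasDerivAt (fun u : ℝ => Real.exp (-(C*u))) (Real.exp (-(C*u)) * (-C)) u :=
      h1.exp
    have h3 := h2.mul (hd' u hu)
    exact h3.congr_deriv (by ring)
  -- g is monotone on Ici 0
  have hg : MonotoneOn (fun u => Real.exp (-(C*u)) * f' u) (Set.Ici 0) := by
    apply monotoneOn_of_deriv_nonneg (convex_Ici 0)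
    · exact fun x hx => ((hgd x hx).continuousAt).continuousWithinAt
    · intro x hx
      rw [interior_Ici] at hx
      exact (hgd x (le_of_lt hx)).differentiableAt.differentiableWithinAt
    · intro x hx
      rw [interior_Ici] at hx
      rw [(hgd x (le_of_lt hx)).deriv]
      have := hineq x (le_of_lt hx)
      have he := (Real.exp_pos (-(C*x))).le
      nlinarith
  -- pointwise comparison: f' u ≤ exp (C*(u-t)) * f' t for 0 ≤ u ≤ t
  have hcomp : ∀ t u : ℝ, 0 ≤ u → u ≤ t → f' u ≤ Real.exp (C*(u-t)) * f' t := by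
    intro t u hu hut
    have h := hg (show u ∈ Set.Ici (0:ℝ) from hu) (show t ∈ Set.Ici (0:ℝ) from le_trans hu hut) hut
    have e1 : Real.exp (C*u) * Real.exp (-(C*u)) = 1 := by rw [← Real.exp_add]; ring_nf; exact Real.exp_zero
    have e2 : Real.exp (C*u) * Real.exp (-(C*t)) = Real.exp (C*(u-t)) := by
      rw [← Real.exp_add]; ring_nf
    calc f' u = Real.exp (C*u) * (Real.exp (-(C*u)) * f' u) := by
          rw [← mul_assoc, e1, one_mul]
      _ ≤ Real.exp (C*u) * (Real.exp (-(C*t)) * f' t) :=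
          mul_le_mul_of_nonneg_left h (Real.exp_pos _).le
      _ = Real.exp (C*(u-t)) * f' t := by rw [← mul_assoc, e2]
  -- key quantitative inequality
  have key : ∀ t : ℝ, 1 ≤ t → K * (f t - f (t-1)) ≤ f' t := by
    intro t ht
    -- φ u = f u - f' t / C * exp (C*(u-t)) is antitone on [t-1, t]
    have hφd : ∀ u : ℝ, 0 ≤ u → HasDerivAt (fun u => f u - f' t / C * Real.exp (C*(u-t)))
        (f' u - f' t * Real.exp (C*(u-t))) u := by
      intro u hu
      have h1 : HasDerivAt (fun u : ℝ => C*(u-t)) C u := by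
        simpa using ((hasDerivAt_id u).sub_const t).const_mul C
      have h2 : HasDerivAt (fun u : ℝ => Real.exp (C*(u-t))) (Real.exp (C*(u-t)) * C) u :=
        h1.exp
      have h3 := (hd u hu).sub (h2.const_mul (f' t / C))
      exact h3.congr_deriv (by rw [mul_comm (Real.exp _) C, ← mul_assoc, div_mul_cancel₀ _ hC.ne'])
    have hφ : AntitoneOn (fun u => f u - f' t / C * Real.exp (C*(u-t))) (Set.Icc (t-1) t) := by
      apply antitoneOn_of_deriv_nonpos (convex_Icc _ _)
      · intro x hx
        have hx0 : (0:ℝ) ≤ x := le_trans (by linarith) hx.1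
        exact ((hφd x hx0).continuousAt).continuousWithinAt
      · intro x hx
        rw [interior_Icc] at hx
        have hx0 : (0:ℝ) ≤ x := le_trans (by linarith) hx.1.le
        exact (hφd x hx0).differentiableAt.differentiableWithinAt
      · intro x hx
        rw [interior_Icc] at hx
        have hx0 : (0:ℝ) ≤ x := le_trans (by linarith) hx.1.le
        rw [(hφd x hx0).deriv]
        have := hcomp t x hx0 hx.2.le
        linarith
    have h1 : t - 1 ∈ Set.Icc (t-1) t := ⟨le_refl _, by linarith⟩
    have h2 : t ∈ Set.Icc (t-1) t := ⟨by linarith, le_refl _⟩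
    have h3 := hφ h1 h2 (by linarith)
    simp only at h3
    rw [show C*(t-t) = 0 by ring, show C*(t-1-t) = -C by ring, Real.exp_zero, mul_one] at h3
    -- h3 : f t - f' t / C ≤ f (t-1) - f' t / C * exp (-C)
    have : f t - f (t-1) ≤ f' t / C * (1 - Real.exp (-C)) := by linarith
    have h4 := mul_le_mul_of_nonneg_left this hKpos.le
    calc K * (f t - f (t-1)) ≤ K * (f' t / C * (1 - Real.exp (-C))) := h4
      _ = f' t := by rw [hK]; field_simp
  -- f is antitone on Ici 0
  have hA : AntitoneOn f (Set.Ici 0) := by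
    apply antitoneOn_of_deriv_nonpos (convex_Ici 0)
    · exact fun x hx => ((hd x hx).continuousAt).continuousWithinAt
    · intro x hx
      rw [interior_Ici] at hx
      exact (hd x (le_of_lt hx)).differentiableAt.differentiableWithinAt
    · intro x hx
      rw [interior_Ici] at hx
      rw [(hd x (le_of_lt hx)).deriv]
      exact hmono x (le_of_lt hx)
  set F : ℝ → ℝ := fun t => f (max t 0) with hF
  have hFanti : Antitone F := by
    intro a b hab
    exact hA (le_max_right a 0) (le_max_right b 0) (max_le_max hab le_rfl)
  have hFbdd : BddBelow (Set.range F) := by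
    refine ⟨m, ?_⟩
    rintro _ ⟨t, rfl⟩
    exact hm _ (le_max_right _ _)
  have hL := tendsto_atTop_ciInf hFanti hFbdd
  set L : ℝ := ⨅ t, F t with hLdef
  have h2 : Filter.Tendsto (fun t => F (t-1)) Filter.atTop (nhds L) :=
    hL.comp (tendsto_atTop_add_const_right _ (-1) tendsto_id)
  have hD : Filter.Tendsto (fun t => K * (F t - F (t-1))) Filter.atTop (nhds 0) := by
    have := (hL.sub h2).const_mul K
    simpa using this
  apply tendsto_of_tendsto_of_tendsto_of_le_of_le' hD tendsto_const_nhds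
  · filter_upwards [eventually_ge_atTop (1:ℝ)] with t ht
    have e1 : F t = f t := by rw [hF]; simp [max_eq_left (by linarith : (0:ℝ) ≤ t)]
    have e2 : F (t-1) = f (t-1) := by rw [hF]; simp [max_eq_left (by linarith : (0:ℝ) ≤ t-1)]
    rw [e1, e2]
    exact key t ht
  · filter_upwards [eventually_ge_atTop (0:ℝ)] with t ht
    exact hmono t ht
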